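/- Let S = ⟨a_1,…,a_n⟩ ⊆ ℤ^m ⊕ T be a reduced monoid, let {g_1,…,g_s} be a binomial generating set of the lattice ideal I_{S̃} of S̃ = ⟨(a_1,1),…,(a_n,1)⟩, and set B = {b_1,…,b_s} with b_i = deg_S(g_i). Then S ∖ L_S = Ap_S(B). -/

import Mathlib

open MvPolynomial

/-- The `S`-degree of an exponent vector. -/
def degS {n : ℕ} {G : Type*} [AddCommMonoid G] (a : Fin n → G) (lam : Fin n → ℕ) : G :=
  ∑ i, lam i • a i

/-- The lattice ideal of the monoid generated by `a`. -/
noncomputable def latticeIdeal (K : Type) [Field K] {n : ℕ} {G : Type*} [AddCommMonoid G]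
    (a : Fin n → G) : Ideal (MvPolynomial (Fin n) K) :=
  Ideal.span {f | ∃ α β : Fin n →₀ ℕ, degS a ⇑α = degS a ⇑β ∧
    f = monomial α (1 : K) - monomial β 1}

/-- The set of elements of `S = ⟨a_1,…,a_n⟩` having at least two different factorizations
of the same length. -/
def LSet {n : ℕ} {G : Type*} [AddCommMonoid G] (a : Fin n → G) : Set G :=
  {x | ∃ lam nu : Fin n → ℕ, lam ≠ nu ∧ degS a lam = x ∧ degS a nu = x ∧
    ∑ i, lam i = ∑ i, nu i}

/-- The Apéry set of the monoid generated by `a` with respect to the family `b`. -/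
def apery {n s : ℕ} {G : Type*} [AddCommGroup G] (a : Fin n → G) (b : Fin s → G) : Set G :=
  {x | x ∈ AddSubmonoid.closure (Set.range a) ∧
    ∀ i, x - b i ∉ AddSubmonoid.closure (Set.range a)}

lemma degS_add {n : ℕ} {G : Type*} [AddCommMonoid G] (a : Fin n → G) (u v : Fin n → ℕ) :
    degS a (u + v) = degS a u + degS a v := by
  simp [degS, add_smul, Finset.sum_add_distrib]

lemma mem_closure_iff_degS {n : ℕ} {G : Type*} [AddCommMonoid G] (a : Fin n → G) (x : G) :
    x ∈ AddSubmonoid.closure (Set.range a) ↔ ∃ lam : Fin n → ℕ, degS a lam = x := by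
  constructor
  · intro hx
    induction hx using AddSubmonoid.closure_induction with
    | mem y hy =>
      obtain ⟨i, rfl⟩ := hy
      exact ⟨Pi.single i 1, by simp [degS, Pi.single_apply]⟩
    | zero => exact ⟨0, by simp [degS]⟩
    | add y z _ _ hy hz =>
      obtain ⟨u, hu⟩ := hy
      obtain ⟨v, hv⟩ := hz
      exact ⟨u + v, by rw [degS_add, hu, hv]⟩
  · rintro ⟨lam, rfl⟩
    exact AddSubmonoid.sum_mem _ fun i _ =>
      AddSubmonoid.nsmul_mem _ (AddSubmonoid.subset_closure (Set.mem_range_self i)) _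

lemma span_binomials_support {K : Type} [Field K] {n s : ℕ} (gα gβ : Fin s → (Fin n →₀ ℕ))
    (p : MvPolynomial (Fin n) K)
    (hp : p ∈ Ideal.span (Set.range fun i => monomial (gα i) (1 : K) - monomial (gβ i) 1))
    (c : Fin n →₀ ℕ) (hc : MvPolynomial.coeff c p ≠ 0) :
    ∃ i, gα i ≤ c ∨ gβ i ≤ c := by
  let J : Ideal (MvPolynomial (Fin n) K) :=
  { carrier := {q | ∀ c, coeff c q ≠ 0 → ∃ i, gα i ≤ c ∨ gβ i ≤ c}
    add_mem' := by
      intro p q hp hq c hc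
      by_cases h : coeff c p ≠ 0
      · exact hp c h
      · push_neg at h
        refine hq c ?_
        simpa [coeff_add, h] using hc
    zero_mem' := by intro c hc; simp at hc
    smul_mem' := by
      intro q p hp c hc
      rw [smul_eq_mul, coeff_mul] at hc
      obtain ⟨⟨u, v⟩, huv, hne0⟩ := Finset.exists_ne_zero_of_sum_ne_zero hc
      have hv : coeff v p ≠ 0 := fun h => hne0 (by simp [h])
      obtain ⟨i, hi⟩ := hp v hv
      have hle : v ≤ c := by
        rw [Finset.HasAntidiagonal.mem_antidiagonal] at huv
        exact huv ▸ le_add_self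
      exact ⟨i, hi.imp (fun h => h.trans hle) (fun h => h.trans hle)⟩ }
  have hmem : p ∈ J := by
    refine Ideal.span_le.mpr ?_ hp
    rintro f ⟨i, rfl⟩ c hc
    rw [coeff_sub, coeff_monomial, coeff_monomial] at hc
    by_cases h1 : gα i = c
    · exact ⟨i, Or.inl (le_of_eq h1)⟩
    · by_cases h2 : gβ i = c
      · exact ⟨i, Or.inr (le_of_eq h2)⟩
      · simp [h1, h2] at hc
  exact hmem c hc

/-- **Theorem.** Let `S = ⟨a_1,…,a_n⟩ ⊆ ℤ^m ⊕ T` be a reduced monoid,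
`{g_1,…,g_s}` a binomial generating set of `I_{S̃}` and `b_i = deg_S(g_i)`.
Then `S \ L_S = Ap_S(B)`. -/
theorem compl_LSet_eq_apery
    {m n s : ℕ} {T : Type} [AddCommGroup T] [Fintype T]
    (K : Type) [Field K]
    (a : Fin n → (Fin m → ℤ) × T)
    -- `S` is reduced:
    (hred : ∀ x, x ∈ AddSubmonoid.closure (Set.range a) →
      -x ∈ AddSubmonoid.closure (Set.range a) → x = 0)
    -- `a` is the minimal set of generators:
    (hmin : ∀ i, a i ∉ AddSubmonoid.closure (Set.range a \ {a i}))
    (gα gβ : Fin s → (Fin n →₀ ℕ))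
    -- `g_i = x^{gα i} - x^{gβ i}` is a (nonzero) binomial of `I_{S̃}`:
    (hne : ∀ i, gα i ≠ gβ i)
    (hhom : ∀ i, degS (fun j => ((a j, (1 : ℤ)) : ((Fin m → ℤ) × T) × ℤ)) ⇑(gα i) =
                 degS (fun j => ((a j, (1 : ℤ)) : ((Fin m → ℤ) × T) × ℤ)) ⇑(gβ i))
    -- `{g_1,…,g_s}` generates `I_{S̃}`:
    (hgen : Ideal.span (Set.range fun i => monomial (gα i) (1 : K) - monomial (gβ i) 1) =
      latticeIdeal K (fun j => ((a j, (1 : ℤ)) : ((Fin m → ℤ) × T) × ℤ))) :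
    (AddSubmonoid.closure (Set.range a) : Set ((Fin m → ℤ) × T)) \ LSet a =
      apery a (fun i => degS a ⇑(gα i)) := by
  have hfst : ∀ lam : Fin n → ℕ,
      (degS (fun j => ((a j, (1 : ℤ)) : ((Fin m → ℤ) × T) × ℤ)) lam).1 = degS a lam := by
    intro lam
    simp [degS, Prod.fst_sum]
  have hsnd : ∀ lam : Fin n → ℕ,
      (degS (fun j => ((a j, (1 : ℤ)) : ((Fin m → ℤ) × T) × ℤ)) lam).2
        = ((∑ i, lam i : ℕ) : ℤ) := by
    intro lam
    simp [degS, Prod.snd_sum]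
  have hlen : ∀ i, ∑ j, (gα i) j = ∑ j, (gβ i) j := by
    intro i
    have h2 := congrArg Prod.snd (hhom i)
    rw [hsnd, hsnd] at h2
    exact_mod_cast h2
  have hdeg : ∀ i, degS a ⇑(gα i) = degS a ⇑(gβ i) := by
    intro i
    have h1 := congrArg Prod.fst (hhom i)
    rwa [hfst, hfst] at h1
  ext x
  simp only [Set.mem_diff, apery, Set.mem_setOf_eq, SetLike.mem_coe]
  constructor
  · rintro ⟨hxS, hxL⟩
    refine ⟨hxS, fun i hbad => hxL ?_⟩
    obtain ⟨μ, hμ⟩ := (mem_closure_iff_degS a _).mp hbad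
    refine ⟨μ + ⇑(gα i), μ + ⇑(gβ i), ?_, ?_, ?_, ?_⟩
    · intro h
      apply hne i
      ext j
      have := congrFun h j
      simpa using this
    · rw [degS_add, hμ, sub_add_cancel]
    · rw [degS_add, hμ, ← hdeg i, sub_add_cancel]
    · simp only [Pi.add_apply, Finset.sum_add_distrib]
      rw [hlen i]
  · rintro ⟨hxS, hap⟩
    refine ⟨hxS, ?_⟩
    rintro ⟨lam, nu, hlamnu, hlam, hnu, hlensum⟩
    set lam' : Fin n →₀ ℕ := Finsupp.equivFunOnFinite.symm lam with hlam'
    set nu' : Fin n →₀ ℕ := Finsupp.equivFunOnFinite.symm nu with hnu'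
    have hclam : ⇑lam' = lam := rfl
    have hcnu : ⇑nu' = nu := rfl
    have hne' : lam' ≠ nu' := by
      intro h
      exact hlamnu (by rw [← hclam, ← hcnu, h])
    have hdeq : degS (fun j => ((a j, (1 : ℤ)) : ((Fin m → ℤ) × T) × ℤ)) ⇑lam'
        = degS (fun j => ((a j, (1 : ℤ)) : ((Fin m → ℤ) × T) × ℤ)) ⇑nu' := by
      apply Prod.ext
      · rw [hfst, hfst, hclam, hcnu, hlam, hnu]
      · rw [hsnd, hsnd, hclam, hcnu, hlensum]
    have hmem : (monomial lam' (1 : K) - monomial nu' 1)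
        ∈ latticeIdeal K (fun j => ((a j, (1 : ℤ)) : ((Fin m → ℤ) × T) × ℤ)) :=
      Ideal.subset_span ⟨lam', nu', hdeq, rfl⟩
    rw [← hgen] at hmem
    have hcoeff : coeff lam' (monomial lam' (1 : K) - monomial nu' 1) ≠ 0 := by
      rw [coeff_sub, coeff_monomial, coeff_monomial, if_pos rfl,
        if_neg (fun h => hne' h.symm)]
      simp
    obtain ⟨i, hi⟩ := span_binomials_support gα gβ _ hmem lam' hcoeff
    apply hap i
    rw [mem_closure_iff_degS]
    cases hi with
    | inl h =>
      refine ⟨⇑(lam' - gα i), ?_⟩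
      have hadd : ⇑(lam' - gα i) + ⇑(gα i) = lam := by
        rw [← hclam, ← Finsupp.coe_add, tsub_add_cancel_of_le h]
      have := degS_add a ⇑(lam' - gα i) ⇑(gα i)
      rw [hadd, hlam] at this
      rw [eq_sub_iff_add_eq, ← this]
    | inr h =>
      refine ⟨⇑(lam' - gβ i), ?_⟩
      have hadd : ⇑(lam' - gβ i) + ⇑(gβ i) = lam := by
        rw [← hclam, ← Finsupp.coe_add, tsub_add_cancel_of_le h]
      have := degS_add a ⇑(lam' - gβ i) ⇑(gβ i)
      rw [hadd, hlam] at this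
      rw [eq_sub_iff_add_eq, hdeg i, ← this]
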